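/- For a triangular input array W = (w_{ij} : i,j ≥ 1, i+j−1 ≤ n) of positive reals, the geometric PNG output H = gPNG(W) satisfies, for every (i,j) with i+j = n+1, h_{ij} = Σ_{π ∈ Π_{ij}} Π_{(k,l)∈π} w_{kl}, where Π_{ij} is the set of down-right lattice paths from (1,1) to (i,j). In particular, the anti-diagonal entries of the gPNG array are the point-to-point polymer partition functions. -/

import Mathlib

/-- The geometric RSK local move `l_{ij}` acting on an array of positive reals
(1-based indexing).  For `i,j ≥ 2` it replaces the 2×2 submatrix
`(a b; c d)` with corners `(i-1,j-1)` and `(i,j)` by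
`(bc/(a(b+c)), b; c, d(b+c))`; the boundary moves `l_{i1}`, `l_{1j}` multiply
`x_{i1}` by `x_{i-1,1}` and `x_{1j}` by `x_{1,j-1}`, and `l_{11}` is the identity. -/
noncomputable def lmove (i j : ℕ) (X : ℕ → ℕ → ℝ) : ℕ → ℕ → ℝ :=
  if i = 1 ∧ j = 1 then X
  else if i = 1 then
    fun p q => if p = 1 ∧ q = j then X 1 (j - 1) * X 1 j else X p q
  else if j = 1 then
    fun p q => if p = i ∧ q = 1 then X (i - 1) 1 * X i 1 else X p q
  else
    fun p q =>
      if p = i - 1 ∧ q = j - 1 then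
        X (i - 1) j * X i (j - 1) /
          (X (i - 1) (j - 1) * (X (i - 1) j + X i (j - 1)))
      else if p = i ∧ q = j then X i j * (X (i - 1) j + X i (j - 1))
      else X p q

/-- `π^j_i = l_{ij} ∘ ⋯ ∘ l_{i1}`. -/
noncomputable def piMove (i j : ℕ) (X : ℕ → ℕ → ℝ) : ℕ → ℕ → ℝ :=
  (List.range j).foldl (fun Y k => lmove i (k + 1) Y) X

/-- `R_i = π^{m-i+1}_1 ∘ ⋯ ∘ π^m_i` (for `i ≤ m`), resp.
`R_i = π^1_{i-m+1} ∘ ⋯ ∘ π^m_i` (for `i ≥ m`): insertion of the `i`-th row of an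
array with `m` columns. -/
noncomputable def Rmove (m i : ℕ) (X : ℕ → ℕ → ℝ) : ℕ → ℕ → ℝ :=
  (List.range (min i m)).foldl (fun Y k => piMove (i - k) (m - k) Y) X

/-- gRSK on an `n × m` array: `gRSK = R_n ∘ ⋯ ∘ R_1`. -/
noncomputable def gRSK (n m : ℕ) (X : ℕ → ℕ → ℝ) : ℕ → ℕ → ℝ :=
  (List.range n).foldl (fun Y k => Rmove m (k + 1) Y) X

/-- `ρ^i_j = l_{1,j-i+1} ∘ ⋯ ∘ l_{i-1,j-1} ∘ l_{ij}` for `i ≤ j`, resp.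
`ρ^i_j = l_{i-j+1,1} ∘ ⋯ ∘ l_{i-1,j-1} ∘ l_{ij}` for `i ≥ j`. -/
noncomputable def rhoMove (i j : ℕ) (X : ℕ → ℕ → ℝ) : ℕ → ℕ → ℝ :=
  (List.range (min i j)).foldl (fun Y k => lmove (i - k) (j - k) Y) X

/-- One time step of geometric PNG: `ρ^1_t ∘ ⋯ ∘ ρ^t_1`. -/
noncomputable def pngStage (t : ℕ) (X : ℕ → ℕ → ℝ) : ℕ → ℕ → ℝ :=
  (List.range t).foldl (fun Y k => rhoMove (t - k) (1 + k) Y) X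

/-- Geometric PNG on the triangular array `(w_{ij} : i+j-1 ≤ n)`:
`gPNG = (ρ^1_n ∘ ⋯ ∘ ρ^n_1) ∘ ⋯ ∘ (ρ^1_2 ∘ ρ^2_1) ∘ ρ^1_1`. -/
noncomputable def gPNG (n : ℕ) (X : ℕ → ℕ → ℝ) : ℕ → ℕ → ℝ :=
  (List.range n).foldl (fun Y t => pngStage (t + 1) Y) X

/-- The weight of the down-right lattice path from `(1,1)` to `(p,q)` encoded by
the sequence of steps `s` (`true` = down, i.e. increase the first index): the
product of the entries of `w` along the path. -/
noncomputable def pathWeight (w : ℕ → ℕ → ℝ) (p q : ℕ) (s : Fin (p + q - 2) → Bool) : ℝ :=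
  ∏ k ∈ Finset.range (p + q - 1),
    w (1 + ((List.ofFn s).take k).count true)
      (1 + (k - ((List.ofFn s).take k).count true))

/-- The point-to-point polymer partition function
`Z_{p,q} = Σ_{π : (1,1) → (p,q) down-right} Π_{(i,j) ∈ π} w_{ij}`,
the sum running over all down-right lattice paths from `(1,1)` to `(p,q)`. -/
noncomputable def partitionFn (w : ℕ → ℕ → ℝ) (p q : ℕ) : ℝ :=
  ∑ s ∈ Finset.univ.filter
      (fun s : Fin (p + q - 2) → Bool => (List.ofFn s).count true = p - 1),
    pathWeight w p q s

/- ### Local move lemmas -/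

lemma lmove_ne (i j p q : ℕ) (X : ℕ → ℕ → ℝ) (h1 : ¬(p = i ∧ q = j))
    (h2 : ¬(p = i - 1 ∧ q = j - 1)) : lmove i j X p q = X p q := by
  unfold lmove
  split_ifs with ha hb hc
  · rfl
  · subst hb
    simp only [if_neg h1]
  · subst hc
    simp only [if_neg h1]
  · simp only [if_neg h1, if_neg h2]

lemma lmove_self (i j : ℕ) (X : ℕ → ℕ → ℝ) (hi : 2 ≤ i) (hj : 2 ≤ j) :
    lmove i j X i j = X i j * (X (i - 1) j + X i (j - 1)) := by
  unfold lmove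
  rw [if_neg (by omega), if_neg (by omega), if_neg (by omega),
    if_neg (by omega), if_pos ⟨rfl, rfl⟩]

lemma lmove_1j (j : ℕ) (X : ℕ → ℕ → ℝ) (hj : 2 ≤ j) :
    lmove 1 j X 1 j = X 1 (j - 1) * X 1 j := by
  unfold lmove
  rw [if_neg (by omega), if_pos rfl, if_pos ⟨rfl, rfl⟩]

lemma lmove_i1 (i : ℕ) (X : ℕ → ℕ → ℝ) (hi : 2 ≤ i) :
    lmove i 1 X i 1 = X (i - 1) 1 * X i 1 := by
  unfold lmove
  rw [if_neg (by omega), if_neg (by omega), if_pos rfl, if_pos ⟨rfl, rfl⟩]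

/- ### Generic fold preservation -/

lemma foldl_apply_eq {α : Type} (L : List α) (g : α → (ℕ → ℕ → ℝ) → (ℕ → ℕ → ℝ))
    (p q : ℕ) (h : ∀ a ∈ L, ∀ Y, g a Y p q = Y p q) :
    ∀ X, (L.foldl (fun Y a => g a Y) X) p q = X p q := by
  induction L with
  | nil => intro X; rfl
  | cons a L ih =>
    intro X
    rw [List.foldl_cons, ih (fun b hb => h b (List.mem_cons_of_mem a hb))]
    exact h a List.mem_cons_self _

/- ### rhoMove lemmas -/

lemma rho_outside (i j p q : ℕ) (X : ℕ → ℕ → ℝ)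
    (h : (p + q) % 2 ≠ (i + j) % 2 ∨ i + j < p + q ∨ (i + j = p + q ∧ ¬(p = i ∧ q = j))) :
    rhoMove i j X p q = X p q := by
  unfold rhoMove
  apply foldl_apply_eq
  intro k hk Y
  rw [List.mem_range] at hk
  have hki : k < i := lt_of_lt_of_le hk (min_le_left i j)
  have hkj : k < j := lt_of_lt_of_le hk (min_le_right i j)
  exact lmove_ne _ _ _ _ _ (by omega) (by omega)

lemma rho_self (i j : ℕ) (X : ℕ → ℕ → ℝ) (hi : 2 ≤ i) (hj : 2 ≤ j) :
    rhoMove i j X i j = X i j * (X (i - 1) j + X i (j - 1)) := by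
  unfold rhoMove
  obtain ⟨m, hm⟩ : ∃ m, min i j = m + 1 := ⟨min i j - 1, by omega⟩
  rw [hm, List.range_succ_eq_map, List.foldl_cons, List.foldl_map]
  have hmi : m + 1 ≤ i := hm ▸ min_le_left i j
  have hmj : m + 1 ≤ j := hm ▸ min_le_right i j
  rw [foldl_apply_eq _ _ _ _ (fun k hk Y => by
    rw [List.mem_range] at hk
    exact lmove_ne _ _ _ _ _ (by omega) (by omega))]
  exact lmove_self i j X hi hj

lemma rho_1j (j : ℕ) (X : ℕ → ℕ → ℝ) (hj : 1 ≤ j) : rhoMove 1 j X = lmove 1 j X := by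
  unfold rhoMove
  rw [min_eq_left hj]
  rfl

lemma rho_i1 (i : ℕ) (X : ℕ → ℕ → ℝ) (hi : 1 ≤ i) : rhoMove i 1 X = lmove i 1 X := by
  unfold rhoMove
  rw [min_eq_right hi]
  rfl

/- ### pngStage lemmas -/

lemma stage_outside (t p q : ℕ) (X : ℕ → ℕ → ℝ)
    (h : (p + q) % 2 ≠ (t + 1) % 2 ∨ t + 1 < p + q) :
    pngStage t X p q = X p q := by
  unfold pngStage
  apply foldl_apply_eq
  intro k hk Y
  rw [List.mem_range] at hk
  apply rho_outside
  omega

lemma stage_interior (t i j : ℕ) (X : ℕ → ℕ → ℝ) (hi : 2 ≤ i) (hj : 2 ≤ j)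
    (ht : i + j = t + 1) :
    pngStage t X i j = X i j * (X (i - 1) j + X i (j - 1)) := by
  unfold pngStage
  have h1 : List.range t = List.range j ++ List.map (fun x => j + x) (List.range (t - j)) := by
    conv_lhs => rw [show t = j + (t - j) from by omega]
    exact List.range_add
  have h2 : List.range j = List.range (j - 1) ++ [j - 1] := by
    conv_lhs => rw [show j = (j - 1) + 1 from by omega]
    exact List.range_succ
  rw [h1, List.foldl_append, h2, List.foldl_append]
  rw [foldl_apply_eq _ _ _ _ (fun a ha Y => by
    rw [List.mem_map] at ha
    obtain ⟨x, hx, rfl⟩ := ha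
    rw [List.mem_range] at hx
    apply rho_outside
    omega)]
  rw [List.foldl_cons, List.foldl_nil]
  rw [show t - (j - 1) = i from by omega, show 1 + (j - 1) = j from by omega]
  rw [rho_self i j _ hi hj]
  set Y := (List.range (j - 1)).foldl (fun Y k => rhoMove (t - k) (1 + k) Y) X with hY
  have hpres : ∀ p q : ℕ, ((p + q) % 2 ≠ (t + 1) % 2 ∨ (t + 1 = p + q ∧ j ≤ q)) →
      Y p q = X p q := by
    intro p q hpq
    apply foldl_apply_eq
    intro k hk Z
    rw [List.mem_range] at hk
    apply rho_outside
    omega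
  rw [hpres i j (by omega), hpres (i - 1) j (by omega), hpres i (j - 1) (by omega)]

lemma stage_1j (t : ℕ) (X : ℕ → ℕ → ℝ) (ht : 2 ≤ t) :
    pngStage t X 1 t = X 1 (t - 1) * X 1 t := by
  unfold pngStage
  have h2 : List.range t = List.range (t - 1) ++ [t - 1] := by
    conv_lhs => rw [show t = (t - 1) + 1 from by omega]
    exact List.range_succ
  rw [h2, List.foldl_append, List.foldl_cons, List.foldl_nil]
  rw [show t - (t - 1) = 1 from by omega, show 1 + (t - 1) = t from by omega]
  rw [rho_1j t _ (by omega), lmove_1j t _ ht]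
  set Y := (List.range (t - 1)).foldl (fun Y k => rhoMove (t - k) (1 + k) Y) X with hY
  have hpres : ∀ p q : ℕ, ((p + q) % 2 ≠ (t + 1) % 2 ∨ (t + 1 = p + q ∧ t ≤ q)) →
      Y p q = X p q := by
    intro p q hpq
    apply foldl_apply_eq
    intro k hk Z
    rw [List.mem_range] at hk
    apply rho_outside
    omega
  rw [hpres 1 (t - 1) (by omega), hpres 1 t (by omega)]

lemma stage_i1 (t : ℕ) (X : ℕ → ℕ → ℝ) (ht : 2 ≤ t) :
    pngStage t X t 1 = X (t - 1) 1 * X t 1 := by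
  unfold pngStage
  have h2 : List.range t = 0 :: List.map Nat.succ (List.range (t - 1)) := by
    conv_lhs => rw [show t = (t - 1) + 1 from by omega]
    exact List.range_succ_eq_map
  rw [h2, List.foldl_cons, List.foldl_map]
  rw [foldl_apply_eq _ _ _ _ (fun k hk Y => by
    rw [List.mem_range] at hk
    apply rho_outside
    omega)]
  have : rhoMove (t - 0) (1 + 0) X = lmove t 1 X := by
    rw [show t - 0 = t from rfl, show 1 + 0 = 1 from rfl]
    exact rho_i1 t X (by omega)
  rw [this, lmove_i1 t X ht]

lemma stage_11 (X : ℕ → ℕ → ℝ) : pngStage 1 X 1 1 = X 1 1 := by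
  show rhoMove (1 - 0) (1 + 0) X 1 1 = X 1 1
  rw [show (1:ℕ) - 0 = 1 from rfl, show (1:ℕ) + 0 = 1 from rfl,
    rho_1j 1 X le_rfl]
  unfold lmove
  rw [if_pos ⟨rfl, rfl⟩]

/- ### Partition function recursion -/

lemma partitionFn_def' (w : ℕ → ℕ → ℝ) (p q n : ℕ) (h : p + q - 2 = n) :
    partitionFn w p q = ∑ s ∈ Finset.univ.filter
      (fun s : Fin n → Bool => (List.ofFn s).count true = p - 1),
      ∏ k ∈ Finset.range (p + q - 1),
        w (1 + ((List.ofFn s).take k).count true)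
          (1 + (k - ((List.ofFn s).take k).count true)) := by
  subst h; rfl

lemma part_row (w : ℕ → ℕ → ℝ) (b : ℕ) :
    partitionFn w 1 (b + 1) = ∏ k ∈ Finset.range (b + 1), w 1 (1 + k) := by
  rw [partitionFn_def' w 1 (b + 1) b (by omega)]
  have hfil : Finset.univ.filter (fun s : Fin b → Bool => (List.ofFn s).count true = 1 - 1)
      = {fun _ => false} := by
    ext s
    simp only [Finset.mem_filter, Finset.mem_univ, true_and, Finset.mem_singleton,
      show (1 : ℕ) - 1 = 0 from rfl, List.count_eq_zero, List.mem_ofFn]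
    constructor
    · intro h
      funext i
      by_contra hc
      exact h ⟨i, by simpa using hc⟩
    · rintro rfl ⟨i, hi⟩
      simp at hi
  rw [hfil, Finset.sum_singleton, show 1 + (b + 1) - 1 = b + 1 from by omega]
  apply Finset.prod_congr rfl
  intro k hk
  rw [Finset.mem_range] at hk
  rw [List.ofFn_const, List.take_replicate, List.count_replicate]
  simp

lemma part_col (w : ℕ → ℕ → ℝ) (a : ℕ) :
    partitionFn w (a + 1) 1 = ∏ k ∈ Finset.range (a + 1), w (1 + k) 1 := by
  rw [partitionFn_def' w (a + 1) 1 a (by omega)]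
  have hfil : Finset.univ.filter (fun s : Fin a → Bool => (List.ofFn s).count true = (a + 1) - 1)
      = {fun _ => true} := by
    ext s
    simp only [Finset.mem_filter, Finset.mem_univ, true_and, Finset.mem_singleton,
      show (a + 1) - 1 = a from rfl]
    constructor
    · intro h
      funext i
      have hall : ∀ b ∈ List.ofFn s, true = b :=
        List.count_eq_length.mp (by rw [List.length_ofFn]; exact h)
      exact (hall (s i) (List.mem_ofFn.2 ⟨i, rfl⟩)).symm
    · rintro rfl
      rw [List.ofFn_const, List.count_replicate_self]
  rw [hfil, Finset.sum_singleton, show (a + 1) + 1 - 1 = a + 1 from by omega]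
  apply Finset.prod_congr rfl
  intro k hk
  rw [Finset.mem_range] at hk
  rw [List.ofFn_const, List.take_replicate, List.count_replicate_self,
    min_eq_left (by omega : k ≤ a)]
  simp

def snocEquivBool (N : ℕ) : ((Fin N → Bool) × Bool) ≃ (Fin (N + 1) → Bool) where
  toFun x := Fin.snoc x.1 x.2
  invFun s := (fun i => s i.castSucc, s (Fin.last N))
  left_inv x := by
    ext i
    · simp
    · simp
  right_inv s := by
    funext i
    refine Fin.lastCases ?_ ?_ i
    · simp
    · intro j; simp

lemma ofFn_snoc (N : ℕ) (t : Fin N → Bool) (c : Bool) :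
    List.ofFn (Fin.snoc t c : Fin (N + 1) → Bool) = List.ofFn t ++ [c] := by
  rw [List.ofFn_succ']
  simp [List.concat_eq_append]

lemma snoc_count (N : ℕ) (t : Fin N → Bool) (c : Bool) :
    (List.ofFn (Fin.snoc t c : Fin (N + 1) → Bool)).count true
      = (List.ofFn t).count true + (if c then 1 else 0) := by
  rw [ofFn_snoc, List.count_append]
  cases c <;> rfl

lemma snoc_prod (w : ℕ → ℕ → ℝ) (N : ℕ) (t : Fin N → Bool) (c : Bool) :
    (∏ k ∈ Finset.range (N + 2),
      w (1 + ((List.ofFn (Fin.snoc t c : Fin (N + 1) → Bool)).take k).count true)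
        (1 + (k - ((List.ofFn (Fin.snoc t c : Fin (N + 1) → Bool)).take k).count true)))
  = (∏ k ∈ Finset.range (N + 1),
      w (1 + ((List.ofFn t).take k).count true)
        (1 + (k - ((List.ofFn t).take k).count true)))
    * w (1 + ((List.ofFn t).count true + (if c then 1 else 0)))
        (1 + ((N + 1) - ((List.ofFn t).count true + (if c then 1 else 0)))) := by
  rw [Finset.prod_range_succ, ofFn_snoc]
  congr 1
  · apply Finset.prod_congr rfl
    intro k hk
    rw [Finset.mem_range] at hk
    rw [List.take_append_of_le_length (by rw [List.length_ofFn]; omega)]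
  · rw [List.take_of_length_le (by simp), List.count_append]
    cases c <;> rfl

lemma part_rec (w : ℕ → ℕ → ℝ) (a b : ℕ) :
    partitionFn w (a + 2) (b + 2)
      = w (a + 2) (b + 2) * (partitionFn w (a + 1) (b + 2) + partitionFn w (a + 2) (b + 1)) := by
  set N := a + b + 1 with hN
  rw [partitionFn_def' w (a + 2) (b + 2) (N + 1) (by omega),
      partitionFn_def' w (a + 1) (b + 2) N (by omega),
      partitionFn_def' w (a + 2) (b + 1) N (by omega)]
  simp only [show (a + 2) + (b + 2) - 1 = N + 2 from by omega,
    show (a + 1) + (b + 2) - 1 = N + 1 from by omega,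
    show (a + 2) + (b + 1) - 1 = N + 1 from by omega,
    show (a + 2) - 1 = a + 1 from by omega,
    show (a + 1) - 1 = a from by omega]
  rw [Finset.sum_filter, Finset.sum_filter, Finset.sum_filter]
  rw [← Equiv.sum_comp (snocEquivBool N)]
  rw [Fintype.sum_prod_type]
  simp only [Fintype.sum_bool]
  have key : ∀ t : Fin N → Bool, ∀ c : Bool, ∀ m : ℕ,
      ((if c then a else a + 1) = m) →
      (if (List.ofFn ((snocEquivBool N) (t, c))).count true = a + 1 then
        ∏ k ∈ Finset.range (N + 2),
          w (1 + ((List.ofFn ((snocEquivBool N) (t, c))).take k).count true)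
            (1 + (k - ((List.ofFn ((snocEquivBool N) (t, c))).take k).count true))
      else 0)
      = (if (List.ofFn t).count true = m then
          (∏ k ∈ Finset.range (N + 1),
            w (1 + ((List.ofFn t).take k).count true)
              (1 + (k - ((List.ofFn t).take k).count true))) * w (a + 2) (b + 2)
        else 0) := by
    intro t c m hm
    subst hm
    have he : (snocEquivBool N) (t, c) = (Fin.snoc t c : Fin (N + 1) → Bool) := rfl
    rw [he, snoc_count]
    by_cases h : (List.ofFn t).count true = (if c then a else a + 1)
    · rw [if_pos h]
      rw [if_pos (by cases c <;> simp_all)]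
      rw [snoc_prod, h]
      congr 2
      · cases c <;> simp <;> omega
      · cases c <;> simp <;> omega
    · rw [if_neg h, if_neg (by cases c <;> simp_all <;> omega)]
  have key1 := fun t => key t true a (by simp)
  have key2 := fun t => key t false (a + 1) (by simp)
  simp only [key1, key2]
  rw [Finset.sum_add_distrib]
  rw [show ((∑ t : Fin N → Bool, if (List.ofFn t).count true = a then
      (∏ k ∈ Finset.range (N + 1),
        w (1 + ((List.ofFn t).take k).count true)
          (1 + (k - ((List.ofFn t).take k).count true))) * w (a + 2) (b + 2) else 0)
    = (∑ t : Fin N → Bool, if (List.ofFn t).count true = a then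
      (∏ k ∈ Finset.range (N + 1),
        w (1 + ((List.ofFn t).take k).count true)
          (1 + (k - ((List.ofFn t).take k).count true))) else 0) * w (a + 2) (b + 2))
    from by rw [Finset.sum_mul]; apply Finset.sum_congr rfl; intro t _; rw [ite_mul, zero_mul]]
  rw [show ((∑ t : Fin N → Bool, if (List.ofFn t).count true = a + 1 then
      (∏ k ∈ Finset.range (N + 1),
        w (1 + ((List.ofFn t).take k).count true)
          (1 + (k - ((List.ofFn t).take k).count true))) * w (a + 2) (b + 2) else 0)
    = (∑ t : Fin N → Bool, if (List.ofFn t).count true = a + 1 then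
      (∏ k ∈ Finset.range (N + 1),
        w (1 + ((List.ofFn t).take k).count true)
          (1 + (k - ((List.ofFn t).take k).count true))) else 0) * w (a + 2) (b + 2))
    from by rw [Finset.sum_mul]; apply Finset.sum_congr rfl; intro t _; rw [ite_mul, zero_mul]]
  ring

lemma part_11 (w : ℕ → ℕ → ℝ) : partitionFn w 1 1 = w 1 1 := by
  have := part_row w 0
  simpa using this

lemma part_row' (w : ℕ → ℕ → ℝ) (j : ℕ) (hj : 2 ≤ j) :
    partitionFn w 1 j = partitionFn w 1 (j - 1) * w 1 j := by
  obtain ⟨b, rfl⟩ : ∃ b, j = b + 2 := ⟨j - 2, by omega⟩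
  rw [show b + 2 - 1 = b + 1 from rfl, part_row, part_row, Finset.prod_range_succ,
    show 1 + (b + 1) = b + 2 from by omega]

lemma part_col' (w : ℕ → ℕ → ℝ) (i : ℕ) (hi : 2 ≤ i) :
    partitionFn w i 1 = partitionFn w (i - 1) 1 * w i 1 := by
  obtain ⟨a, rfl⟩ : ∃ a, i = a + 2 := ⟨i - 2, by omega⟩
  rw [show a + 2 - 1 = a + 1 from rfl, part_col, part_col, Finset.prod_range_succ,
    show 1 + (a + 1) = a + 2 from by omega]

lemma part_rec' (w : ℕ → ℕ → ℝ) (i j : ℕ) (hi : 2 ≤ i) (hj : 2 ≤ j) :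
    partitionFn w i j = w i j * (partitionFn w (i - 1) j + partitionFn w i (j - 1)) := by
  obtain ⟨a, rfl⟩ : ∃ a, i = a + 2 := ⟨i - 2, by omega⟩
  obtain ⟨b, rfl⟩ : ∃ b, j = b + 2 := ⟨j - 2, by omega⟩
  rw [show a + 2 - 1 = a + 1 from rfl, show b + 2 - 1 = b + 1 from rfl]
  exact part_rec w a b

/- ### Main induction -/

lemma gPNG_inv (W : ℕ → ℕ → ℝ) : ∀ s : ℕ, ∀ p q : ℕ, 1 ≤ p → 1 ≤ q →
    (p + q = s + 1 → gPNG s W p q = partitionFn W p q) ∧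
    (s + 1 < p + q → gPNG s W p q = W p q) := by
  intro s
  induction s with
  | zero =>
    intro p q hp hq
    exact ⟨fun h => absurd h (by omega), fun _ => rfl⟩
  | succ s ih =>
    have hstep : gPNG (s + 1) W = pngStage (s + 1) (gPNG s W) := by
      unfold gPNG
      rw [List.range_succ, List.foldl_append, List.foldl_cons, List.foldl_nil]
    intro p q hp hq
    constructor
    · intro hpq
      rw [hstep]
      by_cases hp2 : 2 ≤ p
      · by_cases hq2 : 2 ≤ q
        · rw [stage_interior (s + 1) p q _ hp2 hq2 (by omega)]
          rw [(ih p q hp hq).2 (by omega),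
              (ih (p - 1) q (by omega) hq).1 (by omega),
              (ih p (q - 1) hp (by omega)).1 (by omega)]
          exact (part_rec' W p q hp2 hq2).symm
        · have hq1 : q = 1 := by omega
          subst hq1
          have hps : p = s + 1 := by omega
          subst hps
          rw [stage_i1 (s + 1) _ (by omega), Nat.add_sub_cancel]
          rw [(ih s 1 (by omega) le_rfl).1 (by omega),
              (ih (s + 1) 1 (by omega) le_rfl).2 (by omega)]
          exact (part_col' W (s + 1) (by omega)).symm
      · have hp1 : p = 1 := by omega
        subst hp1
        by_cases hq2 : 2 ≤ q
        · have hqs : q = s + 1 := by omega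
          subst hqs
          rw [stage_1j (s + 1) _ (by omega), Nat.add_sub_cancel]
          rw [(ih 1 s le_rfl (by omega)).1 (by omega),
              (ih 1 (s + 1) le_rfl (by omega)).2 (by omega)]
          exact (part_row' W (s + 1) (by omega)).symm
        · have hq1 : q = 1 := by omega
          subst hq1
          have hs0 : s = 0 := by omega
          subst hs0
          rw [stage_11, (ih 1 1 le_rfl le_rfl).2 (by omega)]
          exact (part_11 W).symm
    · intro hgt
      rw [hstep, stage_outside (s + 1) p q _ (Or.inr (by omega)),
        (ih p q hp hq).2 (by omega)]


/-- For a positive triangular input array `W = (w_{ij} : i+j-1 ≤ n)`, the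
anti-diagonal entries of the geometric PNG output `H = gPNG(W)` are the
point-to-point polymer partition functions: for `i + j = n + 1`,
`h_{ij} = Σ_{π ∈ Π_{ij}} Π_{(k,l) ∈ π} w_{kl}`. -/
theorem gPNG_antidiagonal_eq_partitionFn (n : ℕ) (W : ℕ → ℕ → ℝ)
    (hW : ∀ i j, 1 ≤ i → 1 ≤ j → i + j - 1 ≤ n → 0 < W i j) :
    ∀ i j, 1 ≤ i → 1 ≤ j → i + j = n + 1 →
      gPNG n W i j = partitionFn W i j := by
  intro i j hi hj hij
  exact (gPNG_inv W n i j hi hj).1 hij
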